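/- For n ≥ 1, the number S_n of ordered increasing k-trees of size n whose root-clique has exactly one child equals (n-1)! · (k+1)^{n-1} · binom(n-1 - 1/(k+1), n-1). -/

import Mathlib

/-- Generalized binomial coefficient `binom(x, n) = x(x-1)⋯(x-n+1)/n!`. -/
noncomputable def gbinom (x : ℝ) (n : ℕ) : ℝ :=
  (∏ i ∈ Finset.range n, (x - i)) / (Nat.factorial n)


open Finset

lemma aux_deriv (c : ℝ) (α : ℝ) (n : ℕ) :
    ∀ z : ℝ, 0 < 1 - c * z →
      iteratedDeriv n (fun z : ℝ => 1 - (1 - c * z) ^ α) z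
        = (if n = 0 then (1:ℝ) else 0)
          - (∏ i ∈ Finset.range n, (α - i)) * (-c) ^ n * (1 - c * z) ^ (α - n) := by
  induction n with
  | zero => intro z hz; simp
  | succ n ih =>
    intro z hz
    have hU : IsOpen {w : ℝ | 0 < 1 - c * w} :=
      isOpen_lt continuous_const (by continuity)
    have hmem : {w : ℝ | 0 < 1 - c * w} ∈ nhds z := hU.mem_nhds hz
    have heq : iteratedDeriv n (fun z : ℝ => 1 - (1 - c * z) ^ α)
        =ᶠ[nhds z] fun w => (if n = 0 then (1:ℝ) else 0)
          - (∏ i ∈ Finset.range n, (α - i)) * (-c) ^ n * (1 - c * w) ^ (α - n) :=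
      Filter.eventuallyEq_of_mem hmem (fun w hw => ih w hw)
    rw [iteratedDeriv_succ, heq.deriv_eq]
    have hinner : HasDerivAt (fun w : ℝ => 1 - c * w) (-c) z := by
      simpa using ((hasDerivAt_id z).const_mul c).const_sub (1:ℝ)
    have hrpow : HasDerivAt (fun w : ℝ => (1 - c * w) ^ (α - n))
        ((α - n) * (1 - c * z) ^ (α - n - 1) * (-c)) z :=
      by have h := (Real.hasDerivAt_rpow_const (x := 1 - c * z) (p := α - n) (Or.inl hz.ne')).comp z hinner; exact h
    have hfull := (hrpow.const_mul ((∏ i ∈ Finset.range n, (α - (i:ℝ))) * (-c) ^ n)).const_sub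
      (if n = 0 then (1:ℝ) else 0)
    rw [hfull.deriv]
    have he : α - (n:ℝ) - 1 = α - ((n:ℕ)+1 : ℕ) := by push_cast; ring
    rw [he, Finset.prod_range_succ]
    simp only [Nat.succ_ne_zero, if_neg]
    push_cast
    ring

/-- The number `S_n` of ordered increasing `k`-trees of size `n` whose root-clique
has exactly one child, i.e. `n!` times the `n`-th Taylor coefficient of
`S(z) = 1-(1-(k+1)z)^{1/(k+1)}` at `0`, equals
`(n-1)! (k+1)^{n-1} binom(n-1-1/(k+1), n-1)` for `n ≥ 1`. -/
theorem ktree_S_count (k n : ℕ) (hk : 1 ≤ k) (hn : 1 ≤ n) :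
    iteratedDeriv n (fun z : ℝ => 1 - (1 - ((k : ℝ) + 1) * z) ^ ((1 : ℝ) / ((k : ℝ) + 1))) 0
      = (Nat.factorial (n - 1) : ℝ) * ((k : ℝ) + 1) ^ (n - 1)
          * gbinom ((n : ℝ) - 1 - 1 / ((k : ℝ) + 1)) (n - 1) := by
  obtain ⟨m, rfl⟩ : ∃ m, n = m + 1 := ⟨n - 1, (Nat.succ_pred_eq_of_pos hn).symm⟩
  set c : ℝ := (k : ℝ) + 1 with hcdef
  have hc : (0:ℝ) < c := by positivity
  set α : ℝ := 1 / c with hadef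
  have h0 : (0:ℝ) < 1 - c * 0 := by simp
  rw [aux_deriv c α (m+1) 0 h0]
  simp only [mul_zero, sub_zero, Real.one_rpow, Nat.add_sub_cancel, Nat.succ_ne_zero, if_neg]
  have hcast : ((m:ℝ) + 1) - 1 = (m:ℝ) := by ring
  push_cast
  rw [hcast]
  unfold gbinom
  -- rewrite prod on LHS
  rw [Finset.prod_range_succ']
  -- rewrite prod on RHS
  have hprod : ∏ i ∈ Finset.range m, ((m:ℝ) - α - i)
      = (-1:ℝ)^m * ∏ i ∈ Finset.range m, (α - ((i:ℝ) + 1)) := by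
    have hrefl := Finset.prod_range_reflect (fun j : ℕ => ((j:ℝ) + 1 - α)) m
    have h1 : ∏ i ∈ Finset.range m, ((m:ℝ) - α - i)
        = ∏ j ∈ Finset.range m, (((m - 1 - j : ℕ) : ℝ) + 1 - α) := by
      refine Finset.prod_congr rfl fun j hj => ?_
      have hj' : j < m := Finset.mem_range.mp hj
      have : m - 1 - j = m - (j + 1) := by omega
      rw [this, Nat.cast_sub (by omega)]
      push_cast
      ring
    rw [h1, hrefl]
    rw [show (fun j : ℕ => ((j:ℝ) + 1 - α)) = fun j : ℕ => (-1:ℝ) * (α - ((j:ℝ) + 1)) from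
      funext fun j => by ring]
    rw [Finset.prod_mul_distrib, Finset.prod_const, Finset.card_range]
  rw [hprod]
  simp only [hadef, hcdef, one_div]
  have hfac : ((Nat.factorial m : ℝ)) ≠ 0 := by
    exact_mod_cast Nat.factorial_ne_zero m
  have hα : α * c = 1 := by rw [hadef]; field_simp
  rw [neg_pow]
  have key : ((k:ℝ) + 1) * (1 + (k:ℝ))⁻¹ = 1 := by
    rw [mul_inv_eq_one₀ (by positivity)]; ring
  field_simp
  push_cast
  ring
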